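/- arXiv:math/0407381 — 2 statements merged into one kernel-verified Lean document; each statement's English description precedes it below -/
import Mathlib

section
/- Let l₁, l₂, l₃ ∈ ℂ be nonzero. If Q is a nonzero prime 𝔇-stable ideal of T, then w ∈ Q. -/
noncomputable section

open MvPolynomial

abbrev R3 : Type := MvPolynomial (Fin 3) ℂ

def chi : R3 :=
  C (484/49) * (C 50000 * (X 1) ^ 6 - C 1000 * (X 0) ^ 2 * X 2 * (X 1) ^ 4
    + (X 0) ^ 5 * (X 1) ^ 4 - C 2 * (X 0) ^ 4 * (X 2) ^ 2 * (X 1) ^ 2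
    + C 1800 * X 0 * (X 2) ^ 3 * (X 1) ^ 2 + (X 0) ^ 3 * (X 2) ^ 4 - C 864 * (X 2) ^ 5)

/-- The relation `W² - χ` inside `ℂ[X, Y, Z, W]`. -/
def relIdeal : Ideal (MvPolynomial (Fin 4) ℂ) :=
  Ideal.span {(X 3) ^ 2 - (rename Fin.castSucc chi)}

/-- `T = ℂ[X, Y, Z, W]/(W² - χ)`. -/
abbrev T : Type := MvPolynomial (Fin 4) ℂ ⧸ relIdeal

def mkT : MvPolynomial (Fin 4) ℂ →ₐ[ℂ] T := Ideal.Quotient.mkₐ ℂ relIdeal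

def xT : T := mkT (X 0)
def yT : T := mkT (X 1)
def zT : T := mkT (X 2)
/-- `w`, the class of `W` in `T`. -/
def wT : T := mkT (X 3)

/-- The canonical map `ℂ[X, Y, Z] → T`. -/
def toT : R3 →ₐ[ℂ] T := mkT.comp (rename Fin.castSucc)

/-- The structure map `ℂ → T`. -/
def CT : ℂ → T := algebraMap ℂ T

/-- `D` is the extension of `d*` to `T`. -/
def IsDStarT (D : Derivation ℂ T T) : Prop :=
  D xT = CT (4/5) * yT * (xT ^ 3 - CT 1050 * zT) ∧
  D yT = CT (1/10) * xT * (CT 7 * zT ^ 2 - CT 15 * xT * yT ^ 2) ∧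
  D zT = -(CT (2/5)) * yT * (xT ^ 2 * zT + CT 875 * yT ^ 2) ∧
  D wT = -(xT ^ 2 * yT) * wT

/-- `D` is the extension of `e*` to `T`. -/
def IsEStarT (D : Derivation ℂ T T) : Prop :=
  D xT = -(CT 1152) * zT ^ 2 + CT 240 * xT * yT ^ 2 + CT (4/5) * xT ^ 3 * zT ∧
  D yT = yT * (-(CT (6/5)) * xT ^ 2 * zT + CT 200 * yT ^ 2) ∧
  D zT = -(CT 240) * yT ^ 2 * zT - CT (8/5) * xT ^ 2 * zT ^ 2 + CT (4/5) * xT ^ 3 * yT ^ 2 ∧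
  D wT = -(CT 2) * (xT ^ 2 * zT - CT 300 * yT ^ 2) * wT

/-- `D` is the extension of `f*` to `T`. -/
def IsFStarT (D : Derivation ℂ T T) : Prop :=
  D xT = yT * (CT 550 * yT ^ 2 - CT (4/5) * xT ^ 2 * zT) ∧
  D yT = zT * (CT (7/2) * xT * yT ^ 2 - CT (33/10) * zT ^ 2) ∧
  D zT = yT * (CT (11/4) * xT ^ 2 * yT ^ 2 - CT (59/20) * xT * zT ^ 2) ∧
  D wT = -(CT (1/2)) * xT * yT * zT * wT

/-- `D` is the derivation `d_*` attached to the constant `l₁`. -/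
def IsDLow (l₁ : ℂ) (D : Derivation ℂ T T) : Prop :=
  D xT = 0 ∧ D yT = 0 ∧ D zT = CT l₁ * wT ∧ D wT = CT (l₁ / 2) * toT (pderiv 2 chi)

/-- `D` is the derivation `e_*` attached to the constant `l₂`. -/
def IsELow (l₂ : ℂ) (D : Derivation ℂ T T) : Prop :=
  D xT = 0 ∧ D zT = 0 ∧ D yT = CT l₂ * wT ∧ D wT = CT (l₂ / 2) * toT (pderiv 1 chi)

/-- `D` is the derivation `f_*` attached to the constant `l₃`. -/
def IsFLow (l₃ : ℂ) (D : Derivation ℂ T T) : Prop :=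
  D yT = 0 ∧ D zT = 0 ∧ D xT = CT l₃ * wT ∧ D wT = CT (l₃ / 2) * toT (pderiv 0 chi)

/-- `Q` is stable under all six derivations `d₁, d₂, e₁, e₂, f₁, f₂`. -/
def DStableT (dT eT fT dS eS fS : Derivation ℂ T T) (Q : Ideal T) : Prop :=
  (∀ q ∈ Q, (dT + dS) q ∈ Q) ∧ (∀ q ∈ Q, (dT - dS) q ∈ Q) ∧
  (∀ q ∈ Q, (eT + eS) q ∈ Q) ∧ (∀ q ∈ Q, (eT - eS) q ∈ Q) ∧
  (∀ q ∈ Q, (fT + fS) q ∈ Q) ∧ (∀ q ∈ Q, (fT - fS) q ∈ Q)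


/-! ### Auxiliary machinery -/

/-- Split off the last variable of `ℂ[X,Y,Z,W]`. -/
def PhiW : MvPolynomial (Fin 4) ℂ ≃ₐ[ℂ] Polynomial R3 :=
  (renameEquiv ℂ (finRotate 4)).trans (MvPolynomial.finSuccEquiv ℂ 3)

lemma PhiW_X3 : PhiW (X 3) = Polynomial.X := by
  have h : (finRotate 4) (3 : Fin 4) = 0 := by decide
  simp [PhiW, renameEquiv_apply, rename_X, h, finSuccEquiv_X_zero]

lemma PhiW_rename_X (i : Fin 3) : PhiW (X (Fin.castSucc i)) = Polynomial.C (X i) := by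
  have h : (finRotate 4) (Fin.castSucc i) = i.succ := by
    rw [finRotate_succ_apply, Fin.coeSucc_eq_succ]
  simp only [PhiW, AlgEquiv.trans_apply, renameEquiv_apply, rename_X, h, finSuccEquiv_X_succ]

lemma PhiW_rename (p : R3) : PhiW (rename Fin.castSucc p) = Polynomial.C p := by
  have h : (PhiW.toAlgHom.comp (rename (R := ℂ) Fin.castSucc)) = Polynomial.CAlgHom := by
    apply MvPolynomial.algHom_ext
    intro i
    simpa [Polynomial.CAlgHom] using PhiW_rename_X i
  simpa [Polynomial.CAlgHom] using DFunLike.congr_fun h p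

lemma mkT_rel : wT ^ 2 = toT chi := by
  have hm : (X 3 : MvPolynomial (Fin 4) ℂ) ^ 2 - rename Fin.castSucc chi ∈ relIdeal :=
    Ideal.subset_span rfl
  have h0 : mkT ((X 3 : MvPolynomial (Fin 4) ℂ) ^ 2 - rename Fin.castSucc chi) = 0 := by
    rw [mkT, Ideal.Quotient.mkₐ_eq_mk, Ideal.Quotient.eq_zero_iff_mem]; exact hm
  have h1 : mkT ((X 3 : MvPolynomial (Fin 4) ℂ) ^ 2) = mkT (rename Fin.castSucc chi) := by
    rw [← sub_eq_zero, ← map_sub]; exact h0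
  simpa [wT, toT, map_pow] using h1

lemma toT_rename (r : R3) : mkT (rename Fin.castSucc r) = toT r := rfl

lemma repr_T (t : T) : ∃ a b : R3, t = toT a + toT b * wT := by
  obtain ⟨p, rfl⟩ := Ideal.Quotient.mk_surjective t
  set m : Polynomial R3 := Polynomial.X ^ 2 - Polynomial.C chi with hm
  have hmonic : m.Monic := Polynomial.monic_X_pow_sub_C chi (by norm_num)
  set q := PhiW p with hq
  have hdeg : (q %ₘ m).degree ≤ 1 := by
    have h := Polynomial.degree_modByMonic_lt q hmonic
    have hdm : m.degree = 2 := Polynomial.degree_X_pow_sub_C (by norm_num) chi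
    rw [hdm] at h
    exact Order.le_of_lt_succ (by exact_mod_cast h)
  refine ⟨(q %ₘ m).coeff 0, (q %ₘ m).coeff 1, ?_⟩
  have hsplit : q = m * (q /ₘ m) + (Polynomial.C ((q %ₘ m).coeff 1) * Polynomial.X
      + Polynomial.C ((q %ₘ m).coeff 0)) := by
    conv_lhs => rw [← Polynomial.modByMonic_add_div q m]
    rw [← Polynomial.eq_X_add_C_of_degree_le_one hdeg]
    ring
  have hp : p = PhiW.symm m * PhiW.symm (q /ₘ m) + (rename Fin.castSucc ((q %ₘ m).coeff 1) * X 3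
      + rename Fin.castSucc ((q %ₘ m).coeff 0)) := by
    apply PhiW.injective
    rw [map_add, map_mul, map_add, map_mul, PhiW.apply_symm_apply, PhiW.apply_symm_apply,
      PhiW_rename, PhiW_rename, PhiW_X3, ← hsplit]
  have hsm : PhiW.symm m = (X 3 : MvPolynomial (Fin 4) ℂ) ^ 2 - rename Fin.castSucc chi := by
    apply PhiW.injective
    rw [PhiW.apply_symm_apply, map_sub, map_pow, PhiW_X3, PhiW_rename]
  have hker : mkT (PhiW.symm m) = 0 := by
    rw [mkT, Ideal.Quotient.mkₐ_eq_mk, hsm, Ideal.Quotient.eq_zero_iff_mem]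
    exact Ideal.subset_span rfl
  have hmk : (Ideal.Quotient.mk relIdeal) p = mkT p := rfl
  rw [hmk, hp, map_add, map_mul, hker, zero_mul, zero_add, map_add, map_mul, toT_rename,
    toT_rename, show mkT (X 3) = wT from rfl]
  ring

lemma indep_T {a b : R3} (h : toT a + toT b * wT = 0) : a = 0 ∧ b = 0 := by
  have hmem : rename Fin.castSucc a + rename Fin.castSucc b * X 3 ∈ relIdeal := by
    rw [← Ideal.Quotient.eq_zero_iff_mem]
    have h2 : (Ideal.Quotient.mk relIdeal) (rename Fin.castSucc a + rename Fin.castSucc b * X 3)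
        = toT a + toT b * wT := by
      show mkT _ = _
      rw [map_add, map_mul, toT_rename, toT_rename, show mkT (X 3) = wT from rfl]
    rw [h2, h]
  rw [relIdeal, Ideal.mem_span_singleton] at hmem
  obtain ⟨c, hc⟩ := hmem
  have hdvd : (Polynomial.X ^ 2 - Polynomial.C chi) ∣
      (Polynomial.C b * Polynomial.X + Polynomial.C a) := by
    refine ⟨PhiW c, ?_⟩
    have := congrArg PhiW hc
    simp only [map_add, map_mul, map_sub, map_pow, PhiW_rename] at this
    rw [PhiW_X3] at this
    rw [add_comm] at this
    exact this
  have hz : (Polynomial.C b * Polynomial.X + Polynomial.C a : Polynomial R3) = 0 := by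
    refine Polynomial.eq_zero_of_dvd_of_degree_lt hdvd ?_
    refine lt_of_le_of_lt Polynomial.degree_linear_le ?_
    rw [Polynomial.degree_X_pow_sub_C (by norm_num : 0 < 2) chi]
    exact_mod_cast one_lt_two
  constructor
  · have := congrArg (fun q => Polynomial.coeff q 0) hz
    simpa using this
  · have := congrArg (fun q => Polynomial.coeff q 1) hz
    simpa using this

/-- Split off the variable `Z` of `ℂ[X,Y,Z]`. -/
def PsiZ : R3 ≃ₐ[ℂ] Polynomial (MvPolynomial (Fin 2) ℂ) :=
  (renameEquiv ℂ (finRotate 3)).trans (MvPolynomial.finSuccEquiv ℂ 2)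

lemma PsiZ_X0 : PsiZ (X 0) = Polynomial.C (X 0) := by
  have h : (finRotate 3) (0 : Fin 3) = (0 : Fin 2).succ := by decide
  simp only [PsiZ, AlgEquiv.trans_apply, renameEquiv_apply, rename_X, h, finSuccEquiv_X_succ]

lemma PsiZ_X1 : PsiZ (X 1) = Polynomial.C (X 1) := by
  have h : (finRotate 3) (1 : Fin 3) = (1 : Fin 2).succ := by decide
  simp only [PsiZ, AlgEquiv.trans_apply, renameEquiv_apply, rename_X, h, finSuccEquiv_X_succ]

lemma PsiZ_X2 : PsiZ (X 2) = Polynomial.X := by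
  have h : (finRotate 3) (2 : Fin 3) = 0 := by decide
  simp [PsiZ, renameEquiv_apply, rename_X, h, finSuccEquiv_X_zero]

lemma PsiZ_C (c : ℂ) : PsiZ (C c) = Polynomial.C (C c) := by
  have := PsiZ.commutes c
  simpa [algebraMap_eq, Polynomial.algebraMap_apply] using this

lemma PsiZ_chi_natDegree : (PsiZ chi).natDegree = 5 := by
  have h : PsiZ chi = Polynomial.C (C (484/49) : MvPolynomial (Fin 2) ℂ) *
      (Polynomial.C (C 50000) * (Polynomial.C (X 1)) ^ 6
        - Polynomial.C (C 1000) * (Polynomial.C (X 0)) ^ 2 * Polynomial.X * (Polynomial.C (X 1)) ^ 4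
        + (Polynomial.C (X 0)) ^ 5 * (Polynomial.C (X 1)) ^ 4
        - Polynomial.C (C 2) * (Polynomial.C (X 0)) ^ 4 * Polynomial.X ^ 2 * (Polynomial.C (X 1)) ^ 2
        + Polynomial.C (C 1800) * Polynomial.C (X 0) * Polynomial.X ^ 3 * (Polynomial.C (X 1)) ^ 2
        + (Polynomial.C (X 0)) ^ 3 * Polynomial.X ^ 4
        - Polynomial.C (C 864) * Polynomial.X ^ 5) := by
    simp only [chi, map_mul, map_sub, map_add, map_pow, PsiZ_X0, PsiZ_X1, PsiZ_X2, PsiZ_C]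
  rw [h]
  compute_degree!

lemma chi_ne_zero : chi ≠ 0 := by
  intro h0
  have := PsiZ_chi_natDegree
  rw [h0, map_zero, Polynomial.natDegree_zero] at this
  exact absurd this (by norm_num)

lemma chi_not_square (a b : R3) (h : a ^ 2 = b ^ 2 * chi) : b = 0 := by
  by_contra hb
  have ha : a ≠ 0 := by
    intro h0
    rw [h0] at h
    have := mul_ne_zero (pow_ne_zero 2 hb) chi_ne_zero
    exact this (by rw [← h]; ring)
  have hPa : PsiZ a ≠ 0 := fun hz => ha (PsiZ.injective (by rw [hz, map_zero]))
  have hPb : PsiZ b ≠ 0 := fun hz => hb (PsiZ.injective (by rw [hz, map_zero]))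
  have hPchi : PsiZ chi ≠ 0 := fun hz => chi_ne_zero (PsiZ.injective (by rw [hz, map_zero]))
  have heq : (PsiZ a) ^ 2 = (PsiZ b) ^ 2 * PsiZ chi := by
    rw [← map_pow, ← map_pow, ← map_mul, h]
  have hdeg := congrArg Polynomial.natDegree heq
  rw [Polynomial.natDegree_pow, Polynomial.natDegree_mul (pow_ne_zero 2 hPb) hPchi,
    Polynomial.natDegree_pow, PsiZ_chi_natDegree] at hdeg
  omega

lemma pderiv_totalDegree_lt (i : Fin 3) (r : R3) (h : 0 < r.totalDegree) :
    (pderiv i r).totalDegree < r.totalDegree := by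
  have hr : pderiv i r = ∑ m ∈ r.support, monomial (m - Finsupp.single i 1) (coeff m r * m i) := by
    conv_lhs => rw [r.as_sum]
    rw [map_sum]
    exact Finset.sum_congr rfl fun m _ => pderiv_monomial
  rw [hr]
  have hb : ∀ m ∈ r.support,
      (monomial (m - Finsupp.single i 1) (coeff m r * m i)).totalDegree ≤ r.totalDegree - 1 := by
    intro m hm
    by_cases hmi : m i = 0
    · simp [hmi]
    · refine (totalDegree_monomial_le _ _).trans ?_
      have hme : (m - Finsupp.single i 1) + Finsupp.single i 1 = m := by
        ext j
        simp only [Finsupp.add_apply, Finsupp.tsub_apply, Finsupp.single_apply]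
        by_cases hji : i = j
        · subst hji; simp; omega
        · simp [hji]
      have hsum : ((m - Finsupp.single i 1).sum fun _ e => e) + 1 = m.sum fun _ e => e := by
        have := Finsupp.sum_add_index' (f := m - Finsupp.single i 1) (g := Finsupp.single i 1)
          (h := fun (_ : Fin 3) (e : ℕ) => e) (fun _ => rfl) (fun _ _ _ => rfl)
        rw [hme] at this
        rw [this, Finsupp.sum_single_index rfl]
      have hle : (m.sum fun _ e => e) ≤ r.totalDegree := le_totalDegree hm
      have : ((m - Finsupp.single i 1).sum fun _ e => e) ≤ r.totalDegree - 1 := by omega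
      exact le_trans (le_of_eq (by rfl)) this
  calc (∑ m ∈ r.support, monomial (m - Finsupp.single i 1) (coeff m r * m i)).totalDegree
      ≤ r.totalDegree - 1 := totalDegree_finsetSum_le hb
    _ < r.totalDegree := by omega

lemma exists_pderiv_ne_zero (r : R3) (h : 0 < r.totalDegree) :
    ∃ i : Fin 3, pderiv i r ≠ 0 := by
  have hr0 : r ≠ 0 := by rintro rfl; simp at h
  obtain ⟨m₀, hm₀, hs⟩ := r.support.exists_mem_eq_sup
    (MvPolynomial.support_nonempty.mpr hr0) (fun m : Fin 3 →₀ ℕ => m.sum fun _ e => e)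
  have hm₀pos : 0 < m₀.sum fun _ e => e := by
    rw [totalDegree] at h; rw [← hs]; exact h
  have hm0 : m₀ ≠ 0 := by rintro rfl; simp [Finsupp.sum] at hm₀pos
  obtain ⟨i, hi⟩ := Finsupp.support_nonempty_iff.mpr hm0
  have hmi : m₀ i ≠ 0 := Finsupp.mem_support_iff.mp hi
  refine ⟨i, fun hz => ?_⟩
  have hco : coeff (m₀ - Finsupp.single i 1) (pderiv i r) = coeff m₀ r * m₀ i := by
    have hr : pderiv i r
        = ∑ m ∈ r.support, monomial (m - Finsupp.single i 1) (coeff m r * m i) := by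
      conv_lhs => rw [r.as_sum]
      rw [map_sum]
      exact Finset.sum_congr rfl fun m _ => pderiv_monomial
    rw [hr, coeff_sum]
    rw [Finset.sum_eq_single m₀]
    · rw [coeff_monomial, if_pos rfl]
    · intro m hm hne
      rw [coeff_monomial]
      by_cases hmi' : m i = 0
      · simp [hmi']
      · rw [if_neg]
        intro he
        apply hne
        ext j
        have := DFunLike.congr_fun he j
        simp only [Finsupp.tsub_apply, Finsupp.single_apply] at this
        by_cases hji : i = j
        · subst hji
          simp at this
          omega
        · simpa [hji] using this
    · intro hm; exact absurd hm₀ hm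
  rw [hz] at hco
  simp only [coeff_zero] at hco
  have hc : coeff m₀ r ≠ 0 := mem_support_iff.mp hm₀
  have h2 : (m₀ i : ℂ) ≠ 0 := Nat.cast_ne_zero.mpr hmi
  exact (mul_ne_zero hc h2) hco.symm

lemma totalDegree_zero_eq_C (r : R3) (h : r.totalDegree = 0) : r = C (coeff 0 r) := by
  ext m
  rw [coeff_C]
  split_ifs with hm
  · rw [← hm]
  · by_contra hne
    have hms : m ∈ r.support := mem_support_iff.mpr hne
    have hx : ∀ x, m x = 0 := fun x => (totalDegree_eq_zero_iff (Fin 3) r).mp h m hms x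
    have hmz : m = 0 := by ext x; simp [hx x]
    exact hm hmz.symm

lemma toT_X0 : toT (X 0) = xT := by
  rw [toT, AlgHom.comp_apply, rename_X, show Fin.castSucc (0 : Fin 3) = (0 : Fin 4) from rfl, xT]

lemma toT_X1 : toT (X 1) = yT := by
  rw [toT, AlgHom.comp_apply, rename_X, show Fin.castSucc (1 : Fin 3) = (1 : Fin 4) from rfl, yT]

lemma toT_X2 : toT (X 2) = zT := by
  rw [toT, AlgHom.comp_apply, rename_X, show Fin.castSucc (2 : Fin 3) = (2 : Fin 4) from rfl, zT]

lemma deriv_toT (D : Derivation ℂ T T) (v : Fin 3 → T) (hv : ∀ i, D (toT (X i)) = v i)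
    (p : R3) : D (toT p) = ∑ i, toT (pderiv i p) * v i := by
  induction p using MvPolynomial.induction_on with
  | C c =>
    have h1 : toT (C c) = algebraMap ℂ T c := by
      rw [show (C c : R3) = algebraMap ℂ R3 c from rfl, toT.commutes]
    simp [h1]
  | add p q hp hq =>
    simp only [map_add, Derivation.map_add, hp, hq, add_mul, ← Finset.sum_add_distrib]
  | mul_X p i hp =>
    rw [map_mul, Derivation.leibniz, smul_eq_mul, smul_eq_mul, hp, hv]
    have hps : ∀ j, pderiv j (p * X i) = pderiv j p * X i + p * (if j = i then 1 else 0) := by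
      intro j
      rw [pderiv_mul]
      congr 1
      by_cases hji : j = i
      · subst hji; rw [pderiv_X_self, mul_one, if_pos rfl, mul_one]
      · rw [pderiv_X_of_ne (Ne.symm hji), if_neg hji, mul_zero]
    have hterm : ∀ j, toT (pderiv j (p * X i)) * v j
        = toT (pderiv j p) * v j * toT (X i) + (if j = i then toT p * v i else 0) := by
      intro j
      rw [hps j, map_add, map_mul, add_mul, map_mul]
      congr 1
      · ring
      · by_cases hji : j = i
        · subst hji; simp
        · simp [hji]
    rw [Finset.sum_congr rfl (fun j _ => hterm j)]
    rw [Finset.sum_add_distrib, Finset.sum_ite_eq' Finset.univ i (fun _ => toT p * v i)]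
    simp only [Finset.mem_univ, if_pos]
    rw [← Finset.sum_mul]
    ring

lemma mem_of_pm (Q : Ideal T) (D E : Derivation ℂ T T)
    (h1 : ∀ q ∈ Q, (D + E) q ∈ Q) (h2 : ∀ q ∈ Q, (D - E) q ∈ Q) :
    ∀ q ∈ Q, E q ∈ Q := by
  intro q hq
  have h3 : (D + E) q - (D - E) q ∈ Q := Q.sub_mem (h1 q hq) (h2 q hq)
  have h4 : (D + E) q - (D - E) q = E q + E q := by
    simp only [Derivation.add_apply, Derivation.sub_apply]; ring
  rw [h4] at h3
  have h5 : CT (1/2) * (E q + E q) = E q := by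
    have h6 : CT (1/2) * 2 = 1 := by
      rw [CT, show (2 : T) = algebraMap ℂ T 2 from (map_ofNat _ 2).symm, ← map_mul]
      norm_num
    calc CT (1/2) * (E q + E q) = (CT (1/2) * 2) * E q := by ring
      _ = E q := by rw [h6, one_mul]
  have h7 := Ideal.mul_mem_left Q (CT (1/2)) h3
  rwa [h5] at h7

lemma pd_closed (Q : Ideal T) (hQ : Q.IsPrime) (hchi : toT chi ∉ Q)
    (D : Derivation ℂ T T) (hmem : ∀ q ∈ Q, D q ∈ Q) (l : ℂ) (hl : l ≠ 0) (i : Fin 3)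
    (hv : ∀ j : Fin 3, D (toT (X j)) = if j = i then CT l * wT else 0)
    (p : R3) (hp : toT p ∈ Q) : toT (pderiv i p) ∈ Q := by
  have hD : D (toT p) = toT (pderiv i p) * (CT l * wT) := by
    rw [deriv_toT D _ hv p]
    rw [Finset.sum_eq_single i]
    · rw [if_pos rfl]
    · intro j _ hji; rw [if_neg hji, mul_zero]
    · intro h; exact absurd (Finset.mem_univ i) h
  have h1 : toT (pderiv i p) * (CT l * wT) ∈ Q := hD ▸ hmem _ hp
  have h2 : (toT (pderiv i p) * (CT l * wT)) * wT ∈ Q := Ideal.mul_mem_right _ _ h1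
  have h3 : (CT l * toT (pderiv i p)) * toT chi ∈ Q := by
    have he : (toT (pderiv i p) * (CT l * wT)) * wT = (CT l * toT (pderiv i p)) * toT chi := by
      rw [← mkT_rel]; ring
    rwa [he] at h2
  rcases hQ.mem_or_mem h3 with h | h
  · have h4 : CT l⁻¹ * (CT l * toT (pderiv i p)) ∈ Q := Ideal.mul_mem_left _ _ h
    have h5 : CT l⁻¹ * (CT l * toT (pderiv i p)) = toT (pderiv i p) := by
      rw [← mul_assoc, CT, ← map_mul, inv_mul_cancel₀ hl, map_one, one_mul]
    rwa [h5] at h4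
  · exact absurd h hchi

/-- For nonzero `l₁, l₂, l₃ ∈ ℂ`, every nonzero prime `𝔇`-stable ideal of
`T = ℂ[X, Y, Z, W]/(W² - χ)` contains `w`. -/
theorem wT_mem_of_prime_Dstable (l₁ l₂ l₃ : ℂ) (h1 : l₁ ≠ 0) (h2 : l₂ ≠ 0) (h3 : l₃ ≠ 0)
    (dT eT fT dS eS fS : Derivation ℂ T T)
    (hdT : IsDStarT dT) (heT : IsEStarT eT) (hfT : IsFStarT fT)
    (hdS : IsDLow l₁ dS) (heS : IsELow l₂ eS) (hfS : IsFLow l₃ fS)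
    (Q : Ideal T) (hQ : Q.IsPrime) (hQ0 : Q ≠ ⊥)
    (hst : DStableT dT eT fT dS eS fS Q) : wT ∈ Q := by
  by_contra hw
  have hchiQ : toT chi ∉ Q := by
    intro h
    rw [← mkT_rel] at h
    exact hw (hQ.mem_of_pow_mem 2 h)
  have hdS_mem : ∀ q ∈ Q, dS q ∈ Q := mem_of_pm Q dT dS hst.1 hst.2.1
  have heS_mem : ∀ q ∈ Q, eS q ∈ Q := mem_of_pm Q eT eS hst.2.2.1 hst.2.2.2.1
  have hfS_mem : ∀ q ∈ Q, fS q ∈ Q := mem_of_pm Q fT fS hst.2.2.2.2.1 hst.2.2.2.2.2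
  have hvd : ∀ j : Fin 3, dS (toT (X j)) = if j = 2 then CT l₁ * wT else 0 := by
    intro j
    fin_cases j <;> simp only [Fin.zero_eta, Fin.mk_one, Fin.reduceFinMk, Fin.isValue]
    · rw [toT_X0, hdS.1, if_neg (by decide)]
    · rw [toT_X1, hdS.2.1, if_neg (by decide)]
    · rw [toT_X2, hdS.2.2.1, if_pos (by decide)]
  have hve : ∀ j : Fin 3, eS (toT (X j)) = if j = 1 then CT l₂ * wT else 0 := by
    intro j
    fin_cases j <;> simp only [Fin.zero_eta, Fin.mk_one, Fin.reduceFinMk, Fin.isValue]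
    · rw [toT_X0, heS.1, if_neg (by decide)]
    · rw [toT_X1, heS.2.2.1, if_pos (by decide)]
    · rw [toT_X2, heS.2.1, if_neg (by decide)]
  have hvf : ∀ j : Fin 3, fS (toT (X j)) = if j = 0 then CT l₃ * wT else 0 := by
    intro j
    fin_cases j <;> simp only [Fin.zero_eta, Fin.mk_one, Fin.reduceFinMk, Fin.isValue]
    · rw [toT_X0, hfS.2.2.1, if_pos (by decide)]
    · rw [toT_X1, hfS.1, if_neg (by decide)]
    · rw [toT_X2, hfS.2.1, if_neg (by decide)]
  have hclose : ∀ (i : Fin 3) (p : R3), toT p ∈ Q → toT (pderiv i p) ∈ Q := by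
    intro i
    fin_cases i <;> simp only [Fin.zero_eta, Fin.mk_one, Fin.reduceFinMk, Fin.isValue]
    · exact pd_closed Q hQ hchiQ fS hfS_mem l₃ h3 0 hvf
    · exact pd_closed Q hQ hchiQ eS heS_mem l₂ h2 1 hve
    · exact pd_closed Q hQ hchiQ dS hdS_mem l₁ h1 2 hvd
  have hconst : ∀ r : R3, r ≠ 0 → r.totalDegree = 0 → toT r ∈ Q → False := by
    intro r hr h0 hmem
    have hc : coeff 0 r ≠ 0 := by
      intro hc0
      exact hr (by rw [totalDegree_zero_eq_C r h0, hc0, map_zero])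
    rw [totalDegree_zero_eq_C r h0] at hmem
    have hmem' : algebraMap ℂ T (coeff 0 r) ∈ Q := by
      rwa [show toT (C (coeff 0 r)) = algebraMap ℂ T (coeff 0 r) from toT.commutes _] at hmem
    have hone : (1 : T) ∈ Q := by
      have := Ideal.mul_mem_left Q (algebraMap ℂ T (coeff 0 r)⁻¹) hmem'
      rwa [← map_mul, inv_mul_cancel₀ hc, map_one] at this
    exact hQ.ne_top (Ideal.eq_top_iff_one Q |>.mpr hone)
  have main : ∀ (n : ℕ) (r : R3), r ≠ 0 → r.totalDegree ≤ n → toT r ∈ Q → False := by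
    intro n
    induction n with
    | zero =>
      intro r hr hdeg hmem
      exact hconst r hr (Nat.le_zero.mp hdeg) hmem
    | succ n ih =>
      intro r hr hdeg hmem
      by_cases h0 : r.totalDegree = 0
      · exact hconst r hr h0 hmem
      · have hpos : 0 < r.totalDegree := Nat.pos_of_ne_zero h0
        obtain ⟨i, hi⟩ := exists_pderiv_ne_zero r hpos
        have hlt := pderiv_totalDegree_lt i r hpos
        exact ih (pderiv i r) hi (by omega) (hclose i r hmem)
  obtain ⟨t, htQ, ht0⟩ := (Submodule.ne_bot_iff Q).mp hQ0
  obtain ⟨a, b, ht⟩ := repr_T t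
  have hprod : toT (a ^ 2 - b ^ 2 * chi) ∈ Q := by
    have hexp : (toT a + toT b * wT) * (toT a - toT b * wT) = toT (a ^ 2 - b ^ 2 * chi) := by
      rw [map_sub, map_mul, map_pow, map_pow, ← mkT_rel]
      ring
    have := Ideal.mul_mem_right (toT a - toT b * wT) Q (ht ▸ htQ)
    rwa [hexp] at this
  have hne : a ^ 2 - b ^ 2 * chi ≠ 0 := by
    intro hz
    have hab : a ^ 2 = b ^ 2 * chi := sub_eq_zero.mp hz
    have hb : b = 0 := chi_not_square a b hab
    have ha : a = 0 := by
      have ha2 : a ^ 2 = 0 := by rw [hab, hb]; ring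
      exact pow_eq_zero_iff (by norm_num) |>.mp ha2
    exact ht0 (by rw [ht, ha, hb]; simp)
  exact absurd (main _ _ hne le_rfl hprod) not_false
end
end

section
/- Let F be a Hilbert quasi-modular form of weight (k₁,…,kₙ) ∈ ℤⁿ and depth ≤ s, with coefficient system (f₍ₛ₁,…,ₛₙ₎) as in the definition. Then for every (s₁,…,sₙ) ∈ ℕⁿ with s₁+⋯+sₙ = s, the coefficient f₍ₛ₁,…,ₛₙ₎ satisfies the transformation law of a Hilbert modular form of weight (k₁−2s₁,…,kₙ−2sₙ): for all γ = [[a,b],[c,d]] ∈ Γ_K and z ∈ ℍⁿ, f₍ₛ₁,…,ₛₙ₎(γ(z)) = ∏ᵢ(σᵢ(c)zᵢ+σᵢ(d))^{kᵢ−2sᵢ}·f₍ₛ₁,…,ₛₙ₎(z). -/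
set_option synthInstance.maxHeartbeats 1000000
set_option maxHeartbeats 1000000
open scoped Classical

noncomputable section

open Complex

/-- The product of upper half planes, as a subset of `ℂⁿ`. -/
def UpperHalfSpace (n : ℕ) : Set (Fin n → ℂ) := {z | ∀ i, 0 < (z i).im}

/-- Functions on `ℍⁿ`. -/
abbrev HFun (n : ℕ) : Type := ↥(UpperHalfSpace n) → ℂ

/-- Extension by zero of a function on `ℍⁿ` to `ℂⁿ`. -/
def extFun {n : ℕ} (F : HFun n) : (Fin n → ℂ) → ℂ :=
  fun z => if h : z ∈ UpperHalfSpace n then F ⟨z, h⟩ else 0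

/-- A function on `ℍⁿ` is holomorphic if it is (complex) differentiable on the open set `ℍⁿ`. -/
def IsHolo {n : ℕ} (F : HFun n) : Prop := DifferentiableOn ℂ (extFun F) (UpperHalfSpace n)

/-- The derivation `Dᵢ = (2πi)⁻¹ ∂/∂zᵢ`. -/
def Dop {n : ℕ} (i : Fin n) (F : HFun n) : HFun n :=
  fun z => (2 * (Real.pi : ℂ) * Complex.I)⁻¹ *
    fderiv ℂ (extFun F) (z : Fin n → ℂ) (Pi.single i 1)

/-- The entry `σᵢ(γ p q)` of an element `γ` of the Hilbert modular group `SL₂(𝓞_K)`,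
viewed as a complex number via the `i`-th real embedding `σ i` of `K`. -/
def entry {K : Type*} [Field K] [NumberField K] {n : ℕ} (σ : Fin n → (K →+* ℝ))
    (γ : Matrix.SpecialLinearGroup (Fin 2) (NumberField.RingOfIntegers K))
    (i : Fin n) (p q : Fin 2) : ℂ :=
  ((σ i (algebraMap (NumberField.RingOfIntegers K) K
    ((γ : Matrix (Fin 2) (Fin 2) (NumberField.RingOfIntegers K)) p q)) : ℝ) : ℂ)

/-- The Möbius action of `γ ∈ SL₂(𝓞_K)` on `ℍⁿ ⊆ ℂⁿ`, via the `n` real embeddings. -/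
def mobius {K : Type*} [Field K] [NumberField K] {n : ℕ} (σ : Fin n → (K →+* ℝ))
    (γ : Matrix.SpecialLinearGroup (Fin 2) (NumberField.RingOfIntegers K))
    (z : Fin n → ℂ) : Fin n → ℂ :=
  fun i => (entry σ γ i 0 0 * z i + entry σ γ i 0 1) /
    (entry σ γ i 1 0 * z i + entry σ γ i 1 1)

/-- The transformation law of a Hilbert quasi-modular form of weight `k` and depth `≤ s`,
with coefficient system `f`. -/
def QMTransform {K : Type*} [Field K] [NumberField K] {n : ℕ} (σ : Fin n → (K →+* ℝ))
    (k : Fin n → ℤ) (s : ℕ) (F : HFun n) (f : (Fin n → Fin (s + 1)) → HFun n) : Prop :=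
  ∀ γ : Matrix.SpecialLinearGroup (Fin 2) (NumberField.RingOfIntegers K),
    ∀ z : ↥(UpperHalfSpace n),
      extFun F (mobius σ γ (z : Fin n → ℂ)) =
        (∏ i, (entry σ γ i 1 0 * (z : Fin n → ℂ) i + entry σ γ i 1 1) ^ (k i)) *
          ∑ v ∈ Finset.univ.filter (fun v : Fin n → Fin (s + 1) => ∑ i, (v i : ℕ) ≤ s),
            f v z * ∏ i, (entry σ γ i 1 0 /
              (entry σ γ i 1 0 * (z : Fin n → ℂ) i + entry σ γ i 1 1)) ^ ((v i : ℕ))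

/-- `F` is a Hilbert quasi-modular form of weight `k` and depth `≤ s`
(a Hilbert modular form when `s = 0`). -/
def IsHQMF {K : Type*} [Field K] [NumberField K] {n : ℕ} (σ : Fin n → (K →+* ℝ))
    (k : Fin n → ℤ) (s : ℕ) (F : HFun n) : Prop :=
  IsHolo F ∧ ∃ f : (Fin n → Fin (s + 1)) → HFun n,
    (∀ v, IsHolo (f v)) ∧ QMTransform σ k s F f

/-- The ring `Y(K)`: the `ℂ`-subalgebra of functions on `ℍⁿ` generated by all
Hilbert quasi-modular forms. -/
def YK {K : Type*} [Field K] [NumberField K] {n : ℕ} (σ : Fin n → (K →+* ℝ)) :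
    Subalgebra ℂ (HFun n) :=
  Algebra.adjoin ℂ {F | ∃ k s, IsHQMF σ k s F}

/-- coeff of product at sum of degree bounds. -/
lemma coeff_prod_of_natDegree_le' {ι : Type*} (t : Finset ι) (p : ι → Polynomial ℂ) (d : ι → ℕ)
    (h : ∀ i ∈ t, (p i).natDegree ≤ d i) :
    (∏ i ∈ t, p i).coeff (∑ i ∈ t, d i) = ∏ i ∈ t, (p i).coeff (d i) := by
  classical
  induction t using Finset.cons_induction with
  | empty => simp
  | cons a t ha ih =>
    rw [Finset.prod_cons, Finset.sum_cons, Finset.prod_cons,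
      Polynomial.coeff_mul_add_eq_of_natDegree_le (h a (Finset.mem_cons_self a t))
        (le_trans (Polynomial.natDegree_prod_le _ _) (Finset.sum_le_sum
          (fun i hi => h i (Finset.mem_cons_of_mem hi)))),
      ih (fun i hi => h i (Finset.mem_cons_of_mem hi))]

lemma coeff_linear_pow (u c : ℂ) (m : ℕ) :
    ((Polynomial.C u + Polynomial.C c * Polynomial.X) ^ m).coeff m = c ^ m := by
  have hdeg : (Polynomial.C u + Polynomial.C c * Polynomial.X).natDegree ≤ 1 := by
    compute_degree
  induction m with
  | zero => simp
  | succ m ih =>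
    rw [pow_succ,
      Polynomial.coeff_mul_add_eq_of_natDegree_le
        (le_trans Polynomial.natDegree_pow_le (by simpa using Nat.mul_le_mul_left m hdeg)) hdeg,
      ih]
    simp [pow_succ]

/-- a multivariate polynomial vanishing on the integer grid is zero -/
lemma mv_eq_zero_of_int_eval : ∀ {n : ℕ} (q : MvPolynomial (Fin n) ℂ),
    (∀ m : Fin n → ℤ, MvPolynomial.eval (fun i => (m i : ℂ)) q = 0) → q = 0 := by
  intro n
  induction n with
  | zero =>
    intro q h
    have h0 := h (fun _ => 0)
    rw [MvPolynomial.eq_C_of_isEmpty q] at h0 ⊢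
    simpa using h0
  | succ n ih =>
    intro q h
    have hQ : MvPolynomial.finSuccEquiv ℂ n q = 0 := by
      apply Polynomial.ext; intro j
      rw [Polynomial.coeff_zero]
      apply ih; intro m
      have hP : Polynomial.map (MvPolynomial.eval (fun i => (m i:ℂ)))
          (MvPolynomial.finSuccEquiv ℂ n q) = 0 := by
        apply Polynomial.eq_zero_of_infinite_isRoot
        apply Set.Infinite.mono (s := Set.range ((↑) : ℤ → ℂ))
        · rintro x ⟨y, rfl⟩
          show Polynomial.IsRoot _ _
          rw [Polynomial.IsRoot, ← MvPolynomial.eval_eq_eval_mv_eval']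
          have hfun : (Fin.cons (y:ℂ) (fun i => (m i:ℂ)) : Fin (n+1) → ℂ)
              = fun i => ((Fin.cons y m : Fin (n+1) → ℤ) i : ℂ) := by
            funext i
            refine Fin.cases ?_ ?_ i <;> simp
          rw [hfun]
          exact h (Fin.cons y m)
        · exact Set.infinite_range_of_injective Int.cast_injective
      have := congrArg (fun P => Polynomial.coeff P j) hP
      simpa [Polynomial.coeff_map] using this
    have := congrArg (MvPolynomial.finSuccEquiv ℂ n).symm hQ
    simpa using this

lemma real_mul_half_plus_one_ne_zero (r : ℝ) (w : ℂ) (hw : 0 < w.im) : (r:ℂ) * w + 1 ≠ 0 := by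
  intro h
  have him : r * w.im = 0 := by
    have := congrArg Complex.im h
    simpa using this
  rcases mul_eq_zero.mp him with h1 | h2
  · rw [h1] at h; simp at h
  · exact (ne_of_gt hw) h2

lemma denom_ne_zero' (a b c d : ℝ) (hdet : a*d - b*c = 1) (z : ℂ) (hz : 0 < z.im) :
    (c:ℂ) * z + d ≠ 0 := by
  intro h
  have him : c * z.im = 0 := by have := congrArg Complex.im h; simpa using this
  rcases mul_eq_zero.mp him with h1 | h2
  · rw [h1] at h
    simp only [ofReal_zero, zero_mul, zero_add] at h
    rw [h1] at hdet
    norm_cast at h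
    rw [h] at hdet
    simp at hdet
  · exact (ne_of_gt hz) h2

lemma div_im_pos (a b c d : ℝ) (hdet : a*d - b*c = 1) (z : ℂ) (hz : 0 < z.im) :
    0 < (((a:ℂ) * z + b) / ((c:ℂ) * z + d)).im := by
  have h0 : (c:ℂ) * z + d ≠ 0 := denom_ne_zero' a b c d hdet z hz
  have key : (((a:ℂ)*z+b).im * ((c:ℂ)*z+d).re - ((a:ℂ)*z+b).re * ((c:ℂ)*z+d).im) = z.im := by
    simp only [Complex.add_re, Complex.add_im, Complex.mul_re, Complex.mul_im,
      Complex.ofReal_re, Complex.ofReal_im]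
    linear_combination z.im * hdet
  rw [Complex.div_im, div_sub_div_same] at *
  rw [show ((a:ℂ)*z+b).im * ((c:ℂ)*z+d).re - ((a:ℂ)*z+b).re * ((c:ℂ)*z+d).im = z.im from key]
  exact div_pos hz (Complex.normSq_pos.mpr h0)

lemma pow_juggle1 (δ τ : ℂ) (hδ : δ ≠ 0) {v s : ℕ} (hv : v ≤ s) :
    δ^s * (τ/δ)^v = τ^v * δ^(s-v) := by
  rw [div_pow, ← Nat.add_sub_cancel' hv, pow_add]
  field_simp
  rw [Nat.add_sub_cancel_left]
  ring

lemma pow_juggle2 (δ τ U m : ℂ) (hδ : δ ≠ 0) {v s : ℕ} (hv : v ≤ s) :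
    δ^s * (U + (τ/δ)*m)^v = (U*δ + m*τ)^v * δ^(s-v) := by
  have hb : (U + (τ/δ)*m) * δ = U*δ + m*τ := by field_simp
  rw [← hb, mul_pow, mul_assoc, ← pow_add, Nat.add_sub_cancel' hv]
  ring

def filt (n s : ℕ) : Finset (Fin n → Fin (s+1)) :=
  Finset.univ.filter (fun v => ∑ i, (v i : ℕ) ≤ s)

def Fpart (n s : ℕ) (J U : Fin n → ℂ) (P : ℂ) (φ ψ : (Fin n → Fin (s+1)) → ℂ)
    (T : Fin n → ℂ) : ℂ :=
  (∑ v ∈ filt n s, φ v * ∏ i, T i ^ (v i : ℕ))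
  - P * ∑ v ∈ filt n s, ψ v * ∏ i, (U i + T i * ((J i)^2)⁻¹) ^ (v i : ℕ)

lemma coeff_prod_linear_pow {n : ℕ} (u c : Fin n → ℂ) (v : Fin n → ℕ) (s : ℕ) (hv : ∑ i, v i ≤ s) :
    (∏ i, (Polynomial.C (u i) + Polynomial.C (c i) * Polynomial.X) ^ (v i)).coeff s
      = if ∑ i, v i = s then ∏ i, c i ^ v i else 0 := by
  have hdeg : ∀ i, ((Polynomial.C (u i) + Polynomial.C (c i) * Polynomial.X) ^ (v i)).natDegree ≤ v i := by
    intro i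
    refine Polynomial.natDegree_pow_le.trans ?_
    have h1 : (Polynomial.C (u i) + Polynomial.C (c i) * Polynomial.X).natDegree ≤ 1 := by
      compute_degree
    calc v i * (Polynomial.C (u i) + Polynomial.C (c i) * Polynomial.X).natDegree
        ≤ v i * 1 := Nat.mul_le_mul_left _ h1
      _ = v i := mul_one _
  rcases eq_or_lt_of_le hv with heq | hlt
  · rw [if_pos heq, ← heq, coeff_prod_of_natDegree_le' _ _ _ (fun i _ => hdeg i)]
    exact Finset.prod_congr rfl (fun i _ => coeff_linear_pow _ _ _)
  · rw [if_neg (ne_of_lt hlt)]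
    exact Polynomial.coeff_eq_zero_of_natDegree_lt
      (lt_of_le_of_lt (le_trans (Polynomial.natDegree_prod_le _ _)
        (Finset.sum_le_sum (fun i _ => hdeg i))) hlt)

lemma monomial_extract {n s : ℕ} (A : Finset (Fin n → Fin (s+1))) (d : (Fin n → Fin (s+1)) → ℂ)
    (h : ∀ C : Fin n → ℂ, ∑ v' ∈ A, d v' * ∏ i, C i ^ (v' i : ℕ) = 0) :
    ∀ v ∈ A, d v = 0 := by
  classical
  intro v hv
  set ν : (Fin n → Fin (s+1)) → (Fin n →₀ ℕ) :=
    fun v' => Finsupp.equivFunOnFinite.symm (fun i => (v' i : ℕ)) with hν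
  have happ : ∀ v' i, (ν v') i = (v' i : ℕ) := fun v' i => by simp [hν]
  have hinj : Function.Injective ν := by
    intro v₁ v₂ h12
    have := Finsupp.equivFunOnFinite.symm.injective h12
    funext i; exact Fin.ext (congrFun this i)
  have hmon : ∀ v' : Fin n → Fin (s+1),
      (∏ i, MvPolynomial.X i ^ (v' i : ℕ) : MvPolynomial (Fin n) ℂ)
        = MvPolynomial.monomial (ν v') 1 := by
    intro v'
    have hG : (MvPolynomial.monomial (ν v') (1:ℂ)) = ∏ i, MvPolynomial.X i ^ (ν v') i := by
      rw [← MvPolynomial.prod_X_pow_eq_monomial]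
      apply Finset.prod_subset (Finset.subset_univ _)
      intro i _ hnot
      rw [Finsupp.notMem_support_iff.mp hnot, pow_zero]
    rw [hG]
    exact Finset.prod_congr rfl (fun i _ => by rw [happ v' i])
  set r : MvPolynomial (Fin n) ℂ :=
    ∑ v' ∈ A, MvPolynomial.C (d v') * ∏ i, MvPolynomial.X i ^ (v' i : ℕ) with hr
  have hr0 : r = 0 := by
    apply MvPolynomial.funext; intro x
    simp only [hr, map_sum, map_mul, map_prod, map_pow, MvPolynomial.eval_C,
      MvPolynomial.eval_X, map_zero]
    exact h x
  have hco := congrArg (MvPolynomial.coeff (ν v)) hr0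
  rw [hr, MvPolynomial.coeff_zero, MvPolynomial.coeff_sum] at hco
  rw [Finset.sum_congr rfl (fun v' _ => by
    rw [hmon v', MvPolynomial.C_mul_monomial, MvPolynomial.coeff_monomial])] at hco
  rw [Finset.sum_eq_single_of_mem v hv
    (fun v' _ hne => if_neg (fun hc => hne (hinj hc))), if_pos rfl, mul_one] at hco
  exact hco

lemma fpart_vanishes {n s : ℕ} (w J U : Fin n → ℂ) (P : ℂ)
    (φ ψ : (Fin n → Fin (s+1)) → ℂ)
    (M : Matrix (Fin n) (Fin n) ℂ) (hM : IsUnit M.det)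
    (hMw : ∀ m : Fin n → ℤ, ∀ i, (M.mulVec (fun j => (m j : ℂ)) i) * w i + 1 ≠ 0)
    (hid : ∀ m : Fin n → ℤ, Fpart n s J U P φ ψ
      (fun i => M.mulVec (fun j => (m j:ℂ)) i / (M.mulVec (fun j => (m j:ℂ)) i * w i + 1)) = 0) :
    ∀ T : Fin n → ℂ, (∀ i, 1 - T i * w i ≠ 0) → Fpart n s J U P φ ψ T = 0 := by
  classical
  set L : Fin n → MvPolynomial (Fin n) ℂ :=
    fun i => ∑ j, MvPolynomial.C (M i j) * MvPolynomial.X j with hL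
  set qq : MvPolynomial (Fin n) ℂ :=
    (∑ v ∈ filt n s, MvPolynomial.C (φ v) *
        ∏ i, (L i)^(v i : ℕ) * ((L i) * MvPolynomial.C (w i) + 1)^(s - (v i : ℕ)))
    - MvPolynomial.C P * ∑ v ∈ filt n s, MvPolynomial.C (ψ v) *
        ∏ i, (MvPolynomial.C (U i) * ((L i) * MvPolynomial.C (w i) + 1)
              + MvPolynomial.C ((J i ^ 2)⁻¹) * (L i))^(v i : ℕ)
           * ((L i) * MvPolynomial.C (w i) + 1)^(s - (v i : ℕ)) with hqq
  have hevalL : ∀ (x : Fin n → ℂ) (i : Fin n), MvPolynomial.eval x (L i) = M.mulVec x i := by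
    intro x i
    simp [hL, Matrix.mulVec, dotProduct]
  have keyeval : ∀ (x : Fin n → ℂ), (∀ i, (M.mulVec x i) * w i + 1 ≠ 0) →
      MvPolynomial.eval x qq = (∏ i, ((M.mulVec x i) * w i + 1)^s)
        * Fpart n s J U P φ ψ (fun i => M.mulVec x i / ((M.mulVec x i) * w i + 1)) := by
    intro x hx
    rw [Fpart, mul_sub, Finset.mul_sum, mul_left_comm, Finset.mul_sum]
    simp only [hqq, map_sub, map_sum, map_mul, map_prod, map_pow, map_add, map_one,
      MvPolynomial.eval_C, MvPolynomial.eval_X, hevalL]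
    congr 1
    · apply Finset.sum_congr rfl; intro v _
      rw [mul_left_comm, ← Finset.prod_mul_distrib]
      congr 1
      apply Finset.prod_congr rfl; intro i _
      rw [pow_juggle1 _ _ (hx i) (Fin.is_le (v i))]
    · congr 1
      apply Finset.sum_congr rfl; intro v _
      rw [mul_left_comm, ← Finset.prod_mul_distrib]
      congr 1
      apply Finset.prod_congr rfl; intro i _
      rw [pow_juggle2 _ _ _ _ (hx i) (Fin.is_le (v i))]
  have hq0 : qq = 0 := by
    apply mv_eq_zero_of_int_eval
    intro m
    rw [keyeval _ (hMw m), hid m, mul_zero]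
  intro T hT
  set τ : Fin n → ℂ := fun i => T i / (1 - T i * w i) with hτ
  set x : Fin n → ℂ := M⁻¹.mulVec τ with hx
  have hMx : M.mulVec x = τ := by
    rw [hx, Matrix.mulVec_mulVec, Matrix.mul_nonsing_inv _ hM, Matrix.one_mulVec]
  have hδ : ∀ i, τ i * w i + 1 = (1 - T i * w i)⁻¹ := by
    intro i
    have h1 : (τ i * w i + 1) * (1 - T i * w i) = 1 := by
      rw [hτ, div_mul_eq_mul_div, div_add' _ _ _ (hT i), div_mul_cancel₀ _ (hT i)]
      ring
    exact eq_inv_of_mul_eq_one_left h1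
  have hδne : ∀ i, τ i * w i + 1 ≠ 0 := fun i => by
    rw [hδ i]; exact inv_ne_zero (hT i)
  have hTτ : (fun i => M.mulVec x i / (M.mulVec x i * w i + 1)) = T := by
    funext i
    rw [hMx, hδ i, hτ]
    field_simp
    exact mul_div_cancel_right₀ (T i) (hT i)
  have h0 := keyeval x (by rw [hMx]; exact hδne)
  rw [hq0, map_zero, hTτ] at h0
  have hprod : (∏ i, ((M.mulVec x i) * w i + 1)^s) ≠ 0 := by
    rw [hMx]
    exact Finset.prod_ne_zero_iff.mpr (fun i _ => pow_ne_zero _ (hδne i))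
  exact ((mul_eq_zero.mp h0.symm).resolve_left hprod)

lemma fpart_top {n s : ℕ} (w J U : Fin n → ℂ) (P : ℂ) (hJ : ∀ i, J i ≠ 0)
    (φ ψ : (Fin n → Fin (s+1)) → ℂ)
    (hvan : ∀ T : Fin n → ℂ, (∀ i, 1 - T i * w i ≠ 0) → Fpart n s J U P φ ψ T = 0)
    (C : Fin n → ℂ) :
    ∑ v ∈ (filt n s).filter (fun v => ∑ i, (v i:ℕ) = s),
        φ v * ∏ i, (J i ^ 2 * C i) ^ (v i : ℕ)
      = P * ∑ v ∈ (filt n s).filter (fun v => ∑ i, (v i:ℕ) = s),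
        ψ v * ∏ i, C i ^ (v i : ℕ) := by
  classical
  set P1 : Polynomial ℂ := ∑ v ∈ filt n s,
    Polynomial.C (φ v * ∏ i, (J i^2 * C i)^(v i:ℕ)) * Polynomial.X ^ (∑ i, (v i : ℕ)) with hP1
  set P2 : Polynomial ℂ := Polynomial.C P * ∑ v ∈ filt n s, Polynomial.C (ψ v) *
    ∏ i, (Polynomial.C (U i) + Polynomial.C (C i) * Polynomial.X) ^ (v i : ℕ) with hP2
  have heval : ∀ t : ℂ, (∀ i, 1 - (J i^2 * C i * t) * w i ≠ 0) → P1.eval t = P2.eval t := by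
    intro t ht
    have h := hvan (fun i => J i^2 * C i * t) ht
    rw [Fpart, sub_eq_zero] at h
    simp only [hP1, hP2, Polynomial.eval_mul, Polynomial.eval_finset_sum, Polynomial.eval_mul,
      Polynomial.eval_C, Polynomial.eval_pow, Polynomial.eval_X, Polynomial.eval_prod,
      Polynomial.eval_add]
    rw [show (∑ v ∈ filt n s, φ v * (∏ i, (J i^2*C i)^(v i:ℕ)) * t ^ (∑ i, (v i:ℕ)))
        = ∑ v ∈ filt n s, φ v * ∏ i, (J i^2*C i*t)^(v i:ℕ) from
      Finset.sum_congr rfl (fun v _ => by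
        rw [mul_assoc, ← Finset.prod_pow_eq_pow_sum, ← Finset.prod_mul_distrib]
        congr 1
        exact Finset.prod_congr rfl (fun i _ => (mul_pow _ _ _).symm))]
    rw [h]
    congr 1
    apply Finset.sum_congr rfl; intro v _
    congr 1
    apply Finset.prod_congr rfl; intro i _
    congr 1
    calc U i + J i ^2 * C i * t * (J i^2)⁻¹
        = U i + (J i^2 * (J i^2)⁻¹) * (C i * t) := by ring
      _ = U i + C i * t := by rw [mul_inv_cancel₀ (pow_ne_zero 2 (hJ i)), one_mul]
  have hbad : {t : ℂ | ¬ ∀ i, 1 - (J i^2 * C i * t) * w i ≠ 0}.Finite := by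
    apply Set.Finite.subset (Set.finite_iUnion
      (fun i : Fin n => Set.finite_singleton ((J i^2 * C i * w i)⁻¹)))
    intro t ht
    simp only [Set.mem_setOf_eq, not_forall, not_not] at ht
    obtain ⟨i, hi⟩ := ht
    apply Set.mem_iUnion.mpr ⟨i, ?_⟩
    have h1 : t * (J i^2 * C i * w i) = 1 := by linear_combination -hi
    simp only [Set.mem_singleton_iff]
    exact eq_inv_of_mul_eq_one_left h1
  have hP12 : P1 = P2 := by
    have hsub : (P1 - P2) = 0 := by
      apply Polynomial.eq_zero_of_infinite_isRoot
      apply Set.Infinite.mono (s := {t : ℂ | ∀ i, 1 - (J i^2 * C i * t) * w i ≠ 0})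
      · intro t ht
        simp only [Set.mem_setOf_eq, Polynomial.IsRoot, Polynomial.eval_sub]
        rw [heval t ht, sub_self]
      · have hcompl : {t : ℂ | ∀ i, 1 - (J i^2 * C i * t) * w i ≠ 0}
            = {t : ℂ | ¬ ∀ i, 1 - (J i^2 * C i * t) * w i ≠ 0}ᶜ := by
          ext t; simp [Set.mem_compl_iff, not_not]
        rw [hcompl]
        exact hbad.infinite_compl
    exact sub_eq_zero.mp hsub
  have hc1 : P1.coeff s = ∑ v ∈ (filt n s).filter (fun v => ∑ i, (v i:ℕ) = s),
      φ v * ∏ i, (J i ^ 2 * C i) ^ (v i : ℕ) := by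
    rw [hP1, Polynomial.finset_sum_coeff]
    rw [Finset.sum_congr rfl (fun v _ => by
      rw [Polynomial.coeff_C_mul, Polynomial.coeff_X_pow])]
    rw [Finset.sum_filter]
    apply Finset.sum_congr rfl; intro v _
    by_cases hc : (∑ i, (v i:ℕ)) = s
    · rw [if_pos hc, if_pos hc.symm, mul_one]
    · rw [if_neg hc, if_neg (fun hh => hc hh.symm), mul_zero]
  have hc2 : P2.coeff s = P * ∑ v ∈ (filt n s).filter (fun v => ∑ i, (v i:ℕ) = s),
      ψ v * ∏ i, C i ^ (v i : ℕ) := by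
    rw [hP2, Polynomial.coeff_C_mul, Polynomial.finset_sum_coeff]
    congr 1
    rw [Finset.sum_congr rfl (fun v hv => by
      rw [Polynomial.coeff_C_mul,
        coeff_prod_linear_pow U C (fun i => (v i : ℕ)) s (by
          simpa [filt, Finset.mem_filter] using hv)])]
    rw [Finset.sum_filter]
    apply Finset.sum_congr rfl; intro v _
    by_cases hc : (∑ i, (v i:ℕ)) = s
    · rw [if_pos hc, if_pos hc]
    · rw [if_neg hc, if_neg hc, mul_zero]
  rw [← hc1, ← hc2, hP12]

lemma exists_primitive_integral (K : Type*) [Field K] [NumberField K] {n : ℕ}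
    (σ : Fin n → (K →+* ℝ)) (hσ : Function.Injective σ) :
    ∃ θ : NumberField.RingOfIntegers K,
      Function.Injective (fun i => σ i (algebraMap (NumberField.RingOfIntegers K) K θ)) := by
  obtain ⟨α, hα⟩ := Field.exists_primitive_element ℚ K
  have hint : IsIntegral ℚ α := IsIntegral.of_finite ℚ α
  obtain ⟨m, hm⟩ := IsIntegral.exists_multiple_integral_of_isLocalization
    (nonZeroDivisors ℤ) (Rₘ := ℚ) α hint
  set θK : K := (m : ℤ) • α with hθK
  have hm0 : (m : ℤ) ≠ 0 := nonZeroDivisors.coe_ne_zero m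
  have hmQ : ((m : ℤ) : ℚ) ≠ 0 := Int.cast_ne_zero.mpr hm0
  refine ⟨⟨θK, hm⟩, ?_⟩
  have htop : IntermediateField.adjoin ℚ {θK} = ⊤ := by
    rw [eq_top_iff, ← hα]
    rw [IntermediateField.adjoin_simple_le_iff]
    have hmem : θK ∈ IntermediateField.adjoin ℚ {θK} :=
      IntermediateField.mem_adjoin_simple_self ℚ θK
    have : α = ((m : ℤ) : ℚ)⁻¹ • θK := by
      rw [hθK, ← Int.cast_smul_eq_zsmul ℚ, smul_smul, inv_mul_cancel₀ hmQ, one_smul]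
    rw [this]
    exact (IntermediateField.adjoin ℚ {θK}).toSubalgebra.smul_mem hmem _
  intro i j hij
  simp only [NumberField.RingOfIntegers.map_mk] at hij
  have hAdj : Algebra.adjoin ℚ {θK} = ⊤ := by
    have h1 := IntermediateField.adjoin_simple_toSubalgebra_of_isAlgebraic
      (IsIntegral.tower_top (A := ℚ) hm : IsIntegral ℚ θK).isAlgebraic
    rw [htop] at h1
    rw [← h1]
    rfl
  apply hσ
  have hmem' : θK ∈ AlgHom.equalizer (σ i).toRatAlgHom (σ j).toRatAlgHom := hij
  have hle : (⊤ : Subalgebra ℚ K) ≤ AlgHom.equalizer (σ i).toRatAlgHom (σ j).toRatAlgHom := by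
    rw [← hAdj]
    exact Algebra.adjoin_le (Set.singleton_subset_iff.mpr hmem')
  ext x
  exact hle (Algebra.mem_top : x ∈ ⊤)



lemma entry_mul_expand {K : Type*} [Field K] [NumberField K] {n : ℕ} (σ : Fin n → (K →+* ℝ))
    (α β : Matrix.SpecialLinearGroup (Fin 2) (NumberField.RingOfIntegers K)) (i : Fin n)
    (p q : Fin 2) :
    entry σ (α * β) i p q
      = entry σ α i p 0 * entry σ β i 0 q + entry σ α i p 1 * entry σ β i 1 q := by
  simp only [entry, Matrix.SpecialLinearGroup.coe_mul, Matrix.mul_apply, Fin.sum_univ_two,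
    map_add, map_mul, Complex.ofReal_add, Complex.ofReal_mul]

lemma step1_lemma {K : Type*} [Field K] [NumberField K] {n : ℕ} (σ : Fin n → (K →+* ℝ))
    (k : Fin n → ℤ) (s : ℕ) (F : HFun n) (f : (Fin n → Fin (s + 1)) → HFun n)
    (ht : QMTransform σ k s F f)
    (γ : Matrix.SpecialLinearGroup (Fin 2) (NumberField.RingOfIntegers K))
    (z : ↥(UpperHalfSpace n))
    (hdetC : ∀ i, entry σ γ i 0 0 * entry σ γ i 1 1 - entry σ γ i 0 1 * entry σ γ i 1 0 = 1)
    (hw : mobius σ γ (z : Fin n → ℂ) ∈ UpperHalfSpace n)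
    (hJ : ∀ i, entry σ γ i 1 0 * (z : Fin n → ℂ) i + entry σ γ i 1 1 ≠ 0)
    (e : NumberField.RingOfIntegers K) :
    Fpart n s (fun i => entry σ γ i 1 0 * (z : Fin n → ℂ) i + entry σ γ i 1 1)
      (fun i => entry σ γ i 1 0 / (entry σ γ i 1 0 * (z : Fin n → ℂ) i + entry σ γ i 1 1))
      (∏ i, (entry σ γ i 1 0 * (z : Fin n → ℂ) i + entry σ γ i 1 1) ^ (k i))
      (fun v' => f v' ⟨mobius σ γ (z : Fin n → ℂ), hw⟩) (fun v' => f v' z)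
      (fun i => ((σ i (algebraMap (NumberField.RingOfIntegers K) K e) : ℝ) : ℂ)
        / (((σ i (algebraMap (NumberField.RingOfIntegers K) K e) : ℝ) : ℂ)
            * mobius σ γ (z : Fin n → ℂ) i + 1)) = 0 := by
  classical
  -- abbreviations (plain functions, no set)
  let aa : Fin n → ℂ := fun i => entry σ γ i 0 0
  let bb : Fin n → ℂ := fun i => entry σ γ i 0 1
  let cc : Fin n → ℂ := fun i => entry σ γ i 1 0
  let dd : Fin n → ℂ := fun i => entry σ γ i 1 1
  let J : Fin n → ℂ := fun i => cc i * (z : Fin n → ℂ) i + dd i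
  let w : Fin n → ℂ := mobius σ γ (z : Fin n → ℂ)
  let ε : Fin n → ℂ := fun i =>
    ((σ i (algebraMap (NumberField.RingOfIntegers K) K e) : ℝ) : ℂ)
  let Δ : Fin n → ℂ := fun i => ε i * w i + 1
  have hΔ : ∀ i, Δ i ≠ 0 := fun i =>
    real_mul_half_plus_one_ne_zero (σ i (algebraMap (NumberField.RingOfIntegers K) K e))
      (w i) (hw i)
  have hwJ : ∀ i, w i * J i = aa i * (z : Fin n → ℂ) i + bb i := fun i =>
    div_mul_cancel₀ _ (hJ i)
  -- the lower-triangular element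
  have hdt : Matrix.det !![(1 : NumberField.RingOfIntegers K), 0; e, 1] = 1 := by
    simp [Matrix.det_fin_two_of]
  set τe : Matrix.SpecialLinearGroup (Fin 2) (NumberField.RingOfIntegers K) :=
    ⟨!![1, 0; e, 1], hdt⟩ with hτe
  have hτ00 : ∀ i, entry σ τe i 0 0 = 1 := by intro i; simp [entry, hτe]
  have hτ01 : ∀ i, entry σ τe i 0 1 = 0 := by intro i; simp [entry, hτe]
  have hτ10 : ∀ i, entry σ τe i 1 0 = ε i := by intro i; simp [entry, hτe, ε]
  have hτ11 : ∀ i, entry σ τe i 1 1 = 1 := by intro i; simp [entry, hτe]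
  -- entries of the product
  have hA00 : ∀ i, entry σ (τe * γ) i 0 0 = aa i := by
    intro i; rw [entry_mul_expand, hτ00, hτ01]; simp [aa]
  have hA01 : ∀ i, entry σ (τe * γ) i 0 1 = bb i := by
    intro i; rw [entry_mul_expand, hτ00, hτ01]; simp [bb]
  have hA10 : ∀ i, entry σ (τe * γ) i 1 0 = ε i * aa i + cc i := by
    intro i; rw [entry_mul_expand, hτ10, hτ11]; simp [aa, cc]
  have hA11 : ∀ i, entry σ (τe * γ) i 1 1 = ε i * bb i + dd i := by
    intro i; rw [entry_mul_expand, hτ10, hτ11]; simp [bb, dd]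
  -- denominators
  have hDJ : ∀ i, (ε i * aa i + cc i) * (z : Fin n → ℂ) i + (ε i * bb i + dd i)
      = Δ i * J i := by
    intro i
    have h := hwJ i
    simp only [Δ, J]
    linear_combination (-(ε i)) * h
  have hDne : ∀ i, (ε i * aa i + cc i) * (z : Fin n → ℂ) i + (ε i * bb i + dd i) ≠ 0 := by
    intro i; rw [hDJ i]; exact mul_ne_zero (hΔ i) (hJ i)
  -- composition of Möbius maps
  have hcomp : mobius σ (τe * γ) (z : Fin n → ℂ) = mobius σ τe w := by
    funext i
    show (entry σ (τe * γ) i 0 0 * (z : Fin n → ℂ) i + entry σ (τe * γ) i 0 1)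
        / (entry σ (τe * γ) i 1 0 * (z : Fin n → ℂ) i + entry σ (τe * γ) i 1 1)
      = (entry σ τe i 0 0 * w i + entry σ τe i 0 1)
        / (entry σ τe i 1 0 * w i + entry σ τe i 1 1)
    rw [hA00, hA01, hA10, hA11, hτ00, hτ01, hτ10, hτ11, hDJ i, one_mul, add_zero,
      ← hwJ i]
    exact mul_div_mul_right _ _ (hJ i)
  -- the two transformation laws
  have h1 := ht (τe * γ) z
  have h2 := ht τe ⟨w, hw⟩
  have hcoe : ((⟨w, hw⟩ : ↥(UpperHalfSpace n)) : Fin n → ℂ) = w := rfl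
  rw [hcoe] at h2
  rw [hcomp] at h1
  have hRR := h1.symm.trans h2
  simp only [hA10, hA11, hτ10, hτ11] at hRR
  -- key algebraic identities
  have hX : ∀ i, (ε i * aa i + cc i) / ((ε i * w i + 1) * J i)
      = cc i / J i + (ε i / (ε i * w i + 1)) * ((J i)^2)⁻¹ := by
    intro i
    have hd1 : aa i * J i - cc i * (aa i * (z : Fin n → ℂ) i + bb i) = 1 := by
      simp only [J]
      linear_combination hdetC i
    have h2' : (ε i * aa i + cc i) * J i = cc i * ((ε i * w i + 1) * J i) + ε i := by
      linear_combination (ε i) * hd1 - (ε i) * (cc i) * (hwJ i)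
    have hLHS : (ε i * aa i + cc i) / ((ε i * w i + 1) * J i)
        = (cc i * ((ε i * w i + 1) * J i) + ε i) / ((ε i * w i + 1) * (J i)^2) := by
      rw [div_eq_div_iff (mul_ne_zero (hΔ i) (hJ i))
        (mul_ne_zero (hΔ i) (pow_ne_zero 2 (hJ i)))]
      linear_combination ((ε i * w i + 1) * J i) * h2'
    have hRHS : cc i / J i + (ε i / (ε i * w i + 1)) * ((J i)^2)⁻¹
        = (cc i * ((ε i * w i + 1) * J i) + ε i) / ((ε i * w i + 1) * (J i)^2) := by
      rw [← div_eq_mul_inv, div_div, div_add_div _ _ (hJ i)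
        (mul_ne_zero (hΔ i) (pow_ne_zero 2 (hJ i)))]
      rw [div_eq_div_iff (mul_ne_zero (hJ i) (mul_ne_zero (hΔ i) (pow_ne_zero 2 (hJ i))))
        (mul_ne_zero (hΔ i) (pow_ne_zero 2 (hJ i)))]
      ring
    rw [hLHS, hRHS]
  have hbase : ∀ i, (ε i * aa i + cc i)
        / ((ε i * aa i + cc i) * (z : Fin n → ℂ) i + (ε i * bb i + dd i))
      = cc i / J i + (ε i / (ε i * w i + 1)) * ((J i)^2)⁻¹ := by
    intro i; rw [hDJ i]; exact hX i
  have hprodk : (∏ i, ((ε i * aa i + cc i) * (z : Fin n → ℂ) i + (ε i * bb i + dd i)) ^ (k i))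
      = (∏ i, (ε i * w i + 1) ^ (k i)) * ∏ i, J i ^ (k i) := by
    rw [← Finset.prod_mul_distrib]
    apply Finset.prod_congr rfl; intro i _
    rw [hDJ i, mul_zpow]
  have hS2 : (∑ v ∈ Finset.univ.filter (fun v : Fin n → Fin (s+1) => ∑ i, (v i : ℕ) ≤ s),
        f v z * ∏ i, ((ε i * aa i + cc i)
          / ((ε i * aa i + cc i) * (z : Fin n → ℂ) i + (ε i * bb i + dd i))) ^ ((v i : ℕ)))
      = ∑ v ∈ Finset.univ.filter (fun v : Fin n → Fin (s+1) => ∑ i, (v i : ℕ) ≤ s),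
        f v z * ∏ i, (cc i / J i + (ε i / (ε i * w i + 1)) * ((J i)^2)⁻¹) ^ ((v i : ℕ)) := by
    apply Finset.sum_congr rfl; intro v _
    congr 1
    exact Finset.prod_congr rfl (fun i _ => by rw [hbase i])
  rw [hprodk, hS2] at hRR
  have hne : (∏ i, (ε i * w i + 1) ^ (k i)) ≠ 0 :=
    Finset.prod_ne_zero_iff.mpr (fun i _ => zpow_ne_zero _ (hΔ i))
  have hcancel : (∏ i, J i ^ (k i)) *
      (∑ v ∈ Finset.univ.filter (fun v : Fin n → Fin (s+1) => ∑ i, (v i : ℕ) ≤ s),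
        f v z * ∏ i, (cc i / J i + (ε i / (ε i * w i + 1)) * ((J i)^2)⁻¹) ^ ((v i : ℕ)))
      = ∑ v ∈ Finset.univ.filter (fun v : Fin n → Fin (s+1) => ∑ i, (v i : ℕ) ≤ s),
        f v ⟨w, hw⟩ * ∏ i, (ε i / (ε i * w i + 1)) ^ ((v i : ℕ)) := by
    apply mul_left_cancel₀ hne
    rw [← mul_assoc]
    exact hRR
  show Fpart n s _ _ _ _ _ _ = 0
  rw [Fpart, sub_eq_zero]
  exact hcancel.symm

/-- The top-depth coefficients of a Hilbert quasi-modular form of weight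
`(k₁, …, kₙ)` and depth `≤ s` transform like Hilbert modular forms of weight
`(k₁ - 2s₁, …, kₙ - 2sₙ)`. -/
theorem top_coefficients_are_modular
    {K : Type*} [Field K] [NumberField K] {n : ℕ}
    (hdeg : Module.finrank ℚ K = n)
    (σ : Fin n → (K →+* ℝ)) (hσ : Function.Injective σ)
    (k : Fin n → ℤ) (s : ℕ) (F : HFun n) (f : (Fin n → Fin (s + 1)) → HFun n)
    (hF : IsHolo F) (hf : ∀ v, IsHolo (f v)) (ht : QMTransform σ k s F f) :
    ∀ v : Fin n → Fin (s + 1), (∑ i, (v i : ℕ)) = s →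
      ∀ γ : Matrix.SpecialLinearGroup (Fin 2) (NumberField.RingOfIntegers K),
        ∀ z : ↥(UpperHalfSpace n),
          extFun (f v) (mobius σ γ (z : Fin n → ℂ)) =
            (∏ i, (entry σ γ i 1 0 * (z : Fin n → ℂ) i + entry σ γ i 1 1)
                ^ (k i - 2 * ((v i : ℕ) : ℤ))) * f v z := by
  classical
  intro v hv γ z
  have hdetR : ∀ i, σ i (algebraMap (NumberField.RingOfIntegers K) K
        ((γ : Matrix (Fin 2) (Fin 2) (NumberField.RingOfIntegers K)) 0 0))
      * σ i (algebraMap (NumberField.RingOfIntegers K) K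
        ((γ : Matrix (Fin 2) (Fin 2) (NumberField.RingOfIntegers K)) 1 1))
      - σ i (algebraMap (NumberField.RingOfIntegers K) K
        ((γ : Matrix (Fin 2) (Fin 2) (NumberField.RingOfIntegers K)) 0 1))
      * σ i (algebraMap (NumberField.RingOfIntegers K) K
        ((γ : Matrix (Fin 2) (Fin 2) (NumberField.RingOfIntegers K)) 1 0)) = 1 := by
    intro i
    have hdet := γ.2
    rw [Matrix.det_fin_two] at hdet
    have h1 := congrArg (fun x => σ i (algebraMap (NumberField.RingOfIntegers K) K x)) hdet
    simpa using h1
  have hdetC : ∀ i, entry σ γ i 0 0 * entry σ γ i 1 1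
      - entry σ γ i 0 1 * entry σ γ i 1 0 = 1 := by
    intro i
    simp only [entry, ← Complex.ofReal_mul, ← Complex.ofReal_sub, hdetR i, Complex.ofReal_one]
  have hJ : ∀ i, entry σ γ i 1 0 * (z : Fin n → ℂ) i + entry σ γ i 1 1 ≠ 0 := fun i =>
    denom_ne_zero' _ _ _ _ (hdetR i) ((z : Fin n → ℂ) i) (z.2 i)
  have hw : mobius σ γ (z : Fin n → ℂ) ∈ UpperHalfSpace n := fun i =>
    div_im_pos _ _ _ _ (hdetR i) ((z : Fin n → ℂ) i) (z.2 i)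
  -- the Vandermonde matrix of a primitive integral element
  obtain ⟨θ, hθ⟩ := exists_primitive_integral K σ hσ
  set ϑ : Fin n → ℂ := fun i =>
    ((σ i (algebraMap (NumberField.RingOfIntegers K) K θ) : ℝ) : ℂ) with hϑdef
  have hϑinj : Function.Injective ϑ := fun i j h => hθ (Complex.ofReal_injective h)
  set M : Matrix (Fin n) (Fin n) ℂ := Matrix.vandermonde ϑ with hMdef
  have hMdet : IsUnit M.det := by
    rw [hMdef, Matrix.det_vandermonde]
    apply isUnit_iff_ne_zero.mpr
    apply Finset.prod_ne_zero_iff.mpr; intro i _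
    apply Finset.prod_ne_zero_iff.mpr; intro j hj
    exact sub_ne_zero.mpr (hϑinj.ne (Finset.mem_Ioi.mp hj).ne')
  have hMv : ∀ (m : Fin n → ℤ) (i : Fin n),
      M.mulVec (fun j => (m j : ℂ)) i
        = ((σ i (algebraMap (NumberField.RingOfIntegers K) K
            (∑ j, m j • θ ^ (j : ℕ))) : ℝ) : ℂ) := by
    intro m i
    rw [map_sum, map_sum, Complex.ofReal_sum]
    simp only [hMdef, Matrix.mulVec, dotProduct, Matrix.vandermonde]
    apply Finset.sum_congr rfl; intro j _
    rw [map_zsmul, map_zsmul, map_pow, map_pow, Complex.ofReal_zsmul, Complex.ofReal_pow,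
      zsmul_eq_mul]
    simp only [Matrix.of_apply]
    ring
  have hMw : ∀ (m : Fin n → ℤ) (i : Fin n),
      M.mulVec (fun j => (m j : ℂ)) i * mobius σ γ (z : Fin n → ℂ) i + 1 ≠ 0 := by
    intro m i
    rw [hMv m i]
    exact real_mul_half_plus_one_ne_zero _ _ (hw i)
  -- the vanishing of Fpart at lattice points, hence everywhere
  have hid : ∀ m : Fin n → ℤ,
      Fpart n s (fun i => entry σ γ i 1 0 * (z : Fin n → ℂ) i + entry σ γ i 1 1)
        (fun i => entry σ γ i 1 0 / (entry σ γ i 1 0 * (z : Fin n → ℂ) i + entry σ γ i 1 1))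
        (∏ i, (entry σ γ i 1 0 * (z : Fin n → ℂ) i + entry σ γ i 1 1) ^ (k i))
        (fun v' => f v' ⟨mobius σ γ (z : Fin n → ℂ), hw⟩) (fun v' => f v' z)
        (fun i => M.mulVec (fun j => (m j : ℂ)) i
          / (M.mulVec (fun j => (m j : ℂ)) i * mobius σ γ (z : Fin n → ℂ) i + 1)) = 0 := by
    intro m
    have hfeq : (fun i => M.mulVec (fun j => (m j : ℂ)) i
          / (M.mulVec (fun j => (m j : ℂ)) i * mobius σ γ (z : Fin n → ℂ) i + 1))
        = (fun i => ((σ i (algebraMap (NumberField.RingOfIntegers K) K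
              (∑ j, m j • θ ^ (j : ℕ))) : ℝ) : ℂ)
          / (((σ i (algebraMap (NumberField.RingOfIntegers K) K
              (∑ j, m j • θ ^ (j : ℕ))) : ℝ) : ℂ)
            * mobius σ γ (z : Fin n → ℂ) i + 1)) :=
      funext (fun i => by rw [hMv m i])
    rw [hfeq]
    exact step1_lemma σ k s F f ht γ z hdetC hw hJ (∑ j, m j • θ ^ (j : ℕ))
  have hvan := fpart_vanishes (mobius σ γ (z : Fin n → ℂ))
    (fun i => entry σ γ i 1 0 * (z : Fin n → ℂ) i + entry σ γ i 1 1)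
    (fun i => entry σ γ i 1 0 / (entry σ γ i 1 0 * (z : Fin n → ℂ) i + entry σ γ i 1 1))
    (∏ i, (entry σ γ i 1 0 * (z : Fin n → ℂ) i + entry σ γ i 1 1) ^ (k i))
    (fun v' => f v' ⟨mobius σ γ (z : Fin n → ℂ), hw⟩) (fun v' => f v' z)
    M hMdet hMw hid
  have htop := fpart_top (mobius σ γ (z : Fin n → ℂ))
    (fun i => entry σ γ i 1 0 * (z : Fin n → ℂ) i + entry σ γ i 1 1)
    (fun i => entry σ γ i 1 0 / (entry σ γ i 1 0 * (z : Fin n → ℂ) i + entry σ γ i 1 1))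
    (∏ i, (entry σ γ i 1 0 * (z : Fin n → ℂ) i + entry σ γ i 1 1) ^ (k i))
    hJ
    (fun v' => f v' ⟨mobius σ γ (z : Fin n → ℂ), hw⟩) (fun v' => f v' z)
    hvan
  -- extraction of the top coefficients
  have hext : ∀ v' ∈ (filt n s).filter (fun v' => ∑ i, (v' i : ℕ) = s),
      f v' ⟨mobius σ γ (z : Fin n → ℂ), hw⟩
        * ∏ i, (entry σ γ i 1 0 * (z : Fin n → ℂ) i + entry σ γ i 1 1) ^ (2 * (v' i : ℕ))
      - (∏ i, (entry σ γ i 1 0 * (z : Fin n → ℂ) i + entry σ γ i 1 1) ^ (k i)) * f v' z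
      = 0 := by
    apply monomial_extract
    intro C
    have h := htop C
    rw [← sub_eq_zero] at h
    rw [← h]
    rw [Finset.mul_sum, ← Finset.sum_sub_distrib]
    apply Finset.sum_congr rfl; intro v' _
    rw [sub_mul]
    congr 1
    · rw [mul_assoc, ← Finset.prod_mul_distrib]
      congr 1
      apply Finset.prod_congr rfl; intro i _
      rw [pow_mul, ← mul_pow]
    · ring
  have hvA : v ∈ (filt n s).filter (fun v' => ∑ i, (v' i : ℕ) = s) :=
    Finset.mem_filter.mpr ⟨Finset.mem_filter.mpr ⟨Finset.mem_univ _, le_of_eq hv⟩, hv⟩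
  have hkey : f v ⟨mobius σ γ (z : Fin n → ℂ), hw⟩
        * ∏ i, (entry σ γ i 1 0 * (z : Fin n → ℂ) i + entry σ γ i 1 1) ^ (2 * (v i : ℕ))
      = (∏ i, (entry σ γ i 1 0 * (z : Fin n → ℂ) i + entry σ γ i 1 1) ^ (k i)) * f v z :=
    sub_eq_zero.mp (hext v hvA)
  -- final rearrangement
  have hne2 : (∏ i, (entry σ γ i 1 0 * (z : Fin n → ℂ) i + entry σ γ i 1 1)
      ^ (2 * (v i : ℕ))) ≠ 0 :=
    Finset.prod_ne_zero_iff.mpr (fun i _ => pow_ne_zero _ (hJ i))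
  have hzp : ∀ i, (entry σ γ i 1 0 * (z : Fin n → ℂ) i + entry σ γ i 1 1)
        ^ (k i - 2 * ((v i : ℕ) : ℤ))
      = (entry σ γ i 1 0 * (z : Fin n → ℂ) i + entry σ γ i 1 1) ^ (k i)
        * ((entry σ γ i 1 0 * (z : Fin n → ℂ) i + entry σ γ i 1 1) ^ (2 * (v i : ℕ)))⁻¹ := by
    intro i
    rw [show (k i - 2 * ((v i : ℕ) : ℤ)) = k i - ((2 * (v i : ℕ) : ℕ) : ℤ) by push_cast; ring]
    rw [zpow_sub₀ (hJ i), div_eq_mul_inv, zpow_natCast]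
  have hlhs : extFun (f v) (mobius σ γ (z : Fin n → ℂ))
      = f v ⟨mobius σ γ (z : Fin n → ℂ), hw⟩ := dif_pos hw
  rw [hlhs, Finset.prod_congr rfl (fun i _ => hzp i), Finset.prod_mul_distrib]
  calc f v ⟨mobius σ γ (z : Fin n → ℂ), hw⟩
      = f v ⟨mobius σ γ (z : Fin n → ℂ), hw⟩
        * (∏ i, (entry σ γ i 1 0 * (z : Fin n → ℂ) i + entry σ γ i 1 1) ^ (2 * (v i : ℕ)))
        * (∏ i, (entry σ γ i 1 0 * (z : Fin n → ℂ) i + entry σ γ i 1 1) ^ (2 * (v i : ℕ)))⁻¹ := by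
        rw [mul_assoc, mul_inv_cancel₀ hne2, mul_one]
    _ = (∏ i, (entry σ γ i 1 0 * (z : Fin n → ℂ) i + entry σ γ i 1 1) ^ (k i)) * f v z
        * (∏ i, (entry σ γ i 1 0 * (z : Fin n → ℂ) i + entry σ γ i 1 1) ^ (2 * (v i : ℕ)))⁻¹ := by
        rw [hkey]
    _ = (∏ i, (entry σ γ i 1 0 * (z : Fin n → ℂ) i + entry σ γ i 1 1) ^ (k i))
        * (∏ i, ((entry σ γ i 1 0 * (z : Fin n → ℂ) i + entry σ γ i 1 1) ^ (2 * (v i : ℕ)))⁻¹)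
        * f v z := by
        rw [← Finset.prod_inv_distrib]
        ring
end
end
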